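/- With the extremal setup below, assume further that the vertices v₁, v₂, v_n are pairwise adjacent and induce an unbalanced triangle in Γ′. Then, for all sufficiently large n, Γ′ has exactly one negative edge. -/

import Mathlib

open Matrix

/-- A signed graph of order `n`: a real symmetric `n × n` matrix with zero diagonal
whose off-diagonal entries lie in `{-1, 0, 1}`. -/
def IsSignedGraph {n : ℕ} (A : Matrix (Fin n) (Fin n) ℝ) : Prop :=
  A.IsSymm ∧ (∀ i, A i i = 0) ∧ ∀ i j, A i j = -1 ∨ A i j = 0 ∨ A i j = 1

/-- The index (largest eigenvalue) of a signed graph. -/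
noncomputable def lambdaMax {n : ℕ} (A : Matrix (Fin n) (Fin n) ℝ) : ℝ :=
  sSup (spectrum ℝ A)

/-- The smallest eigenvalue of a signed graph. -/
noncomputable def lambdaMin {n : ℕ} (A : Matrix (Fin n) (Fin n) ℝ) : ℝ :=
  sInf (spectrum ℝ A)

/-- The spectral radius of a signed graph. -/
noncomputable def rho {n : ℕ} (A : Matrix (Fin n) (Fin n) ℝ) : ℝ :=
  max (lambdaMax A) (-(lambdaMin A))

/-- There is a cycle, all of whose vertices lie in `s`, along whose edges
the product of the entries of `A` is negative. -/
def HasNegCycleOn {n : ℕ} (A : Matrix (Fin n) (Fin n) ℝ) (s : Set (Fin n)) : Prop :=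
  ∃ m : ℕ, 3 ≤ m ∧ ∃ c : ℕ → Fin n,
    (∀ i < m, ∀ j < m, c i = c j → i = j) ∧ (∀ i < m, c i ∈ s) ∧
    (∀ i < m, A (c i) (c ((i + 1) % m)) ≠ 0) ∧
    (∏ i ∈ Finset.range m, A (c i) (c ((i + 1) % m))) < 0

/-- A signed graph is unbalanced if it has a negative cycle. -/
def IsUnbalanced {n : ℕ} (A : Matrix (Fin n) (Fin n) ℝ) : Prop :=
  HasNegCycleOn A Set.univ

/-- An `m`-element set of pairwise adjacent vertices whose induced signed complete
subgraph is unbalanced. -/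
def IsKmMinus {n : ℕ} (A : Matrix (Fin n) (Fin n) ℝ) (m : ℕ) (s : Finset (Fin n)) : Prop :=
  s.card = m ∧ (∀ i ∈ s, ∀ j ∈ s, i ≠ j → A i j ≠ 0) ∧ HasNegCycleOn A ↑s

/-- A `K₄⁻` of a signed graph. -/
def IsK4Minus {n : ℕ} (A : Matrix (Fin n) (Fin n) ℝ) (s : Finset (Fin n)) : Prop :=
  IsKmMinus A 4 s

/-- A signed graph is `t𝒦₄⁻`-free if it contains fewer than `t` distinct `K₄⁻`'s. -/
def TK4Free {n : ℕ} (t : ℕ) (A : Matrix (Fin n) (Fin n) ℝ) : Prop :=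
  {s : Finset (Fin n) | IsK4Minus A s}.ncard < t

/-- Switching isomorphism of signed graphs: `B = (PD) A (PD)ᵀ` for a permutation
matrix `P` and a `±1` diagonal matrix `D`. -/
def SwitchIso {n : ℕ} (A B : Matrix (Fin n) (Fin n) ℝ) : Prop :=
  ∃ (σ : Equiv.Perm (Fin n)) (d : Fin n → ℝ), (∀ i, d i = 1 ∨ d i = -1) ∧
    B = (σ.permMatrix ℝ * Matrix.diagonal d) * A * (σ.permMatrix ℝ * Matrix.diagonal d)ᵀ

/-- The signed graph `Γ_{s,n}`: the vertices `0, …, n-2` are pairwise adjacent,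
the last vertex `n-1` is adjacent exactly to `0, …, s`, and every edge is positive
except the single negative edge joining `n-1` and `0`. -/
noncomputable def GammaSN (s n : ℕ) : Matrix (Fin n) (Fin n) ℝ :=
  fun i j =>
    if i = j then 0
    else if i.val ≠ n - 1 ∧ j.val ≠ n - 1 then 1
    else if min i.val j.val = 0 then -1
    else if min i.val j.val ≤ s then 1
    else 0

/-- The signed graph `Σ_{k,n}` with parameter `r`: vertex `0` is `u₁`, vertex `1` is `u₂`,
vertices `2, …, r+1` are `w₁, …, w_r`, vertices `r+2, …, r+k+1` are `q₁, …, q_k`, and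
vertices `r+k+2, …, n-1` are `v₁, …, v_{n-2-r-k}`.  The only negative edge is `u₁u₂`. -/
noncomputable def SigmaKN (r k n : ℕ) : Matrix (Fin n) (Fin n) ℝ :=
  fun i j =>
    if i = j then 0
    else if min i.val j.val = 0 then (if max i.val j.val = 1 then -1 else 1)
    else if min i.val j.val = 1 then (if max i.val j.val ≤ r + k + 1 then 1 else 0)
    else if max i.val j.val ≤ r + 1 then 1
    else if max i.val j.val ≤ r + k + 1 then 0
    else 1

/-! ### Auxiliary lemmas -/

section Aux

open Finset

/-- Rayleigh quotient bound: the quadratic form is at most `lambdaMax` times the norm. -/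
lemma rayleigh_le {n : ℕ} {B : Matrix (Fin n) (Fin n) ℝ} (hB : B.IsSymm)
    (z : Fin n → ℝ) : z ⬝ᵥ B *ᵥ z ≤ lambdaMax B * (z ⬝ᵥ z) := by
  classical
  have hH : B.IsHermitian := hB
  have hstar : (star (hH.eigenvectorUnitary : Matrix (Fin n) (Fin n) ℝ))
      = (hH.eigenvectorUnitary : Matrix (Fin n) (Fin n) ℝ)ᵀ := by
    ext i j; simp [conjTranspose_apply]
  set U : Matrix (Fin n) (Fin n) ℝ := (hH.eigenvectorUnitary : Matrix (Fin n) (Fin n) ℝ) with hU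
  set w : Fin n → ℝ := Uᵀ *ᵥ z with hw
  have hUU : U * Uᵀ = 1 := by
    rw [← hstar]; exact (Matrix.mem_unitaryGroup_iff).mp hH.eigenvectorUnitary.2
  have hdot : ∀ v : Fin n → ℝ, z ⬝ᵥ (U *ᵥ v) = w ⬝ᵥ v := by
    intro v
    rw [dotProduct_mulVec, hw]
    congr 1
    ext j
    simp [vecMul, dotProduct, mulVec, transpose_apply, mul_comm]
  have hzz : z ⬝ᵥ z = w ⬝ᵥ w := by
    have h1 : z ⬝ᵥ z = z ⬝ᵥ ((U * Uᵀ) *ᵥ z) := by rw [hUU, one_mulVec]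
    rw [h1, ← mulVec_mulVec, hdot]
  have hBz : z ⬝ᵥ B *ᵥ z = ∑ i, hH.eigenvalues i * (w i)^2 := by
    conv_lhs => rw [hH.spectral_theorem, Unitary.conjStarAlgAut_apply]
    rw [hstar, ← mulVec_mulVec, ← mulVec_mulVec, hdot]
    have hdiag : (Matrix.diagonal (RCLike.ofReal ∘ hH.eigenvalues) : Matrix (Fin n) (Fin n) ℝ) *ᵥ w
        = fun i => hH.eigenvalues i * w i := by
      ext i; simp [mulVec_diagonal]
    rw [hdiag]
    simp [dotProduct]
    ring_nf
    congr 1; ext i; ring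
  have hbdd : BddAbove (spectrum ℝ B) := by
    rw [hH.spectrum_real_eq_range_eigenvalues]
    exact (Set.finite_range _).bddAbove
  have hle : ∀ i, hH.eigenvalues i ≤ lambdaMax B := fun i =>
    le_csSup hbdd (hH.eigenvalues_mem_spectrum_real i)
  rw [hBz, hzz]
  have hww : w ⬝ᵥ w = ∑ i, (w i)^2 := by simp [dotProduct, pow_two]
  rw [hww, Finset.mul_sum]
  exact Finset.sum_le_sum fun i _ => mul_le_mul_of_nonneg_right (hle i) (sq_nonneg _)

/-- Modify the entries at the (unordered) pair `(a,b)` to the value `c`. -/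
def updE {n : ℕ} (M : Matrix (Fin n) (Fin n) ℝ) (a b : Fin n) (c : ℝ) :
    Matrix (Fin n) (Fin n) ℝ :=
  fun i j => if (i = a ∧ j = b) ∨ (i = b ∧ j = a) then c else M i j

lemma updE_apply_of_ne {n : ℕ} (M : Matrix (Fin n) (Fin n) ℝ) (a b : Fin n) (c : ℝ)
    {i j : Fin n} (h : ¬((i = a ∧ j = b) ∨ (i = b ∧ j = a))) : updE M a b c i j = M i j :=
  if_neg h

lemma updE_apply_of_pos {n : ℕ} (M : Matrix (Fin n) (Fin n) ℝ) (a b : Fin n) (c : ℝ)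
    {i j : Fin n} (h : (i = a ∧ j = b) ∨ (i = b ∧ j = a)) : updE M a b c i j = c :=
  if_pos h

lemma updE_comm {n : ℕ} (M : Matrix (Fin n) (Fin n) ℝ) (a b : Fin n) (c : ℝ) :
    updE M a b c = updE M b a c := by
  ext i j
  exact if_congr or_comm rfl rfl

lemma updE_isSymm {n : ℕ} {M : Matrix (Fin n) (Fin n) ℝ} (hM : M.IsSymm)
    (a b : Fin n) (c : ℝ) : (updE M a b c).IsSymm := by
  ext i j
  simp only [Matrix.transpose_apply, updE]
  by_cases h : (j = a ∧ i = b) ∨ (j = b ∧ i = a)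
  · rw [if_pos h, if_pos (by tauto)]
  · rw [if_neg h, if_neg (by tauto)]
    exact hM.apply i j

lemma updE_entries {n : ℕ} {M : Matrix (Fin n) (Fin n) ℝ}
    (hM : ∀ i j, M i j = -1 ∨ M i j = 0 ∨ M i j = 1) (a b : Fin n) {c : ℝ}
    (hc : c = -1 ∨ c = 0 ∨ c = 1) :
    ∀ i j, updE M a b c i j = -1 ∨ updE M a b c i j = 0 ∨ updE M a b c i j = 1 := by
  intro i j; unfold updE; split_ifs
  · exact hc
  · exact hM i j

lemma updE_diag {n : ℕ} (M : Matrix (Fin n) (Fin n) ℝ) {a b : Fin n} (hab : a ≠ b) (c : ℝ)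
    (i : Fin n) : updE M a b c i i = M i i := by
  apply updE_apply_of_ne
  rintro (⟨rfl, rfl⟩ | ⟨rfl, rfl⟩) <;> exact hab rfl

lemma quad_expand {n : ℕ} (M : Matrix (Fin n) (Fin n) ℝ) (z : Fin n → ℝ) :
    z ⬝ᵥ M *ᵥ z = ∑ i, ∑ j, z i * M i j * z j := by
  simp [dotProduct, mulVec, Finset.mul_sum, mul_assoc, mul_comm, mul_left_comm]

lemma sum_pair_ite {n : ℕ} (a b : Fin n) (K : ℝ) :
    (∑ i : Fin n, ∑ j : Fin n, if i = a ∧ j = b then K else 0) = K := by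
  have h : ∀ i : Fin n, (∑ j : Fin n, if i = a ∧ j = b then K else 0)
      = if i = a then K else 0 := by
    intro i
    by_cases hi : i = a
    · simp [hi]
    · simp [hi]
  simp [h]

lemma quad_updE {n : ℕ} (M : Matrix (Fin n) (Fin n) ℝ) {a b : Fin n} (hab : a ≠ b) (c : ℝ)
    (z : Fin n → ℝ) :
    z ⬝ᵥ (updE M a b c) *ᵥ z
      = z ⬝ᵥ M *ᵥ z + (c - M a b) * (z a * z b) + (c - M b a) * (z a * z b) := by
  rw [quad_expand, quad_expand]
  have key : ∀ i j, z i * updE M a b c i j * z j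
      = z i * M i j * z j + (if i = a ∧ j = b then (c - M a b) * (z a * z b) else 0)
        + (if i = b ∧ j = a then (c - M b a) * (z a * z b) else 0) := by
    intro i j
    unfold updE
    by_cases h1 : i = a ∧ j = b
    · have h2 : ¬(i = b ∧ j = a) := fun h => hab (h1.1.symm.trans h.1)
      rw [if_pos (Or.inl h1), if_pos h1, if_neg h2, ← h1.1, ← h1.2]
      ring
    · by_cases h2 : i = b ∧ j = a
      · rw [if_pos (Or.inr h2), if_neg h1, if_pos h2, ← h2.1, ← h2.2]
        ring
      · rw [if_neg (by tauto : ¬((i = a ∧ j = b) ∨ (i = b ∧ j = a))), if_neg h1, if_neg h2]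
        ring
  simp only [key, Finset.sum_add_distrib]
  rw [sum_pair_ite, sum_pair_ite]

lemma mulVec_updE_fst {n : ℕ} (M : Matrix (Fin n) (Fin n) ℝ) {a b : Fin n} (hab : a ≠ b)
    (c : ℝ) (x : Fin n → ℝ) :
    ((updE M a b c) *ᵥ x) a = (M *ᵥ x) a + (c - M a b) * x b := by
  simp only [Matrix.mulVec, dotProduct]
  have key : ∀ j, updE M a b c a j * x j
      = M a j * x j + (if j = b then (c - M a b) * x b else 0) := by
    intro j
    unfold updE
    by_cases hj : j = b
    · rw [if_pos (Or.inl ⟨rfl, hj⟩), if_pos hj, hj]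
      ring
    · have h : ¬((a = a ∧ j = b) ∨ (a = b ∧ j = a)) := by
        rintro (⟨-, h⟩ | ⟨h, -⟩)
        · exact hj h
        · exact hab h
      rw [if_neg h, if_neg hj]
      ring
  simp only [key, Finset.sum_add_distrib, Finset.sum_ite_eq' Finset.univ b]
  simp

lemma dot_symm {n : ℕ} {M : Matrix (Fin n) (Fin n) ℝ} (hM : M.IsSymm) (v w : Fin n → ℝ) :
    v ⬝ᵥ M *ᵥ w = w ⬝ᵥ M *ᵥ v := by
  rw [dotProduct_mulVec, ← Matrix.mulVec_transpose, hM.eq, dotProduct_comm]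

lemma perturb_quad {n : ℕ} {M : Matrix (Fin n) (Fin n) ℝ} (hM : M.IsSymm)
    (x : Fin n → ℝ) (a : Fin n) (δ : ℝ) :
    (x + Pi.single a δ) ⬝ᵥ M *ᵥ (x + Pi.single a δ)
      = x ⬝ᵥ M *ᵥ x + 2 * δ * (M *ᵥ x) a + δ^2 * M a a := by
  rw [add_dotProduct, mulVec_add, dotProduct_add, dotProduct_add]
  rw [dot_symm hM x (Pi.single a δ)]
  have h1 : Pi.single a δ ⬝ᵥ M *ᵥ x = δ * (M *ᵥ x) a := by
    simp [dotProduct, Pi.single_apply]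
  have h2 : Pi.single a δ ⬝ᵥ M *ᵥ Pi.single a δ = δ^2 * M a a := by
    have h3 : M *ᵥ Pi.single a δ = fun i => M i a * δ := by
      ext i; simp [mulVec, dotProduct, Pi.single_apply]
    rw [h3]
    simp [dotProduct, Pi.single_apply]
    ring
  rw [h1, h2]; ring

lemma perturb_norm {n : ℕ} (x : Fin n → ℝ) (a : Fin n) (δ : ℝ) :
    (x + Pi.single a δ) ⬝ᵥ (x + Pi.single a δ) = x ⬝ᵥ x + 2 * δ * x a + δ^2 := by
  rw [add_dotProduct, dotProduct_add, dotProduct_add]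
  simp [dotProduct_comm, dotProduct, Pi.single_apply, pow_two]
  ring

lemma triangle_negcycle {n : ℕ} (M : Matrix (Fin n) (Fin n) ℝ) {a b c : Fin n}
    (hab : a ≠ b) (hbc : b ≠ c) (hac : a ≠ c)
    (h1 : M a b ≠ 0) (h2 : M b c ≠ 0) (h3 : M c a ≠ 0)
    (hneg : M a b * M b c * M c a < 0) {s : Set (Fin n)}
    (ha : a ∈ s) (hb : b ∈ s) (hc : c ∈ s) : HasNegCycleOn M s := by
  refine ⟨3, le_refl 3, fun k => if k = 0 then a else if k = 1 then b else c, ?_, ?_, ?_, ?_⟩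
  · intro i hi j hj hij
    interval_cases i <;> interval_cases j <;> simp_all
  · intro i hi; interval_cases i <;> simp [ha, hb, hc]
  · intro i hi; interval_cases i <;> norm_num [*]
  · rw [Finset.prod_range_succ, Finset.prod_range_succ, Finset.prod_range_one]
    norm_num
    exact hneg

lemma hasNegCycleOn_congr {n : ℕ} {M A : Matrix (Fin n) (Fin n) ℝ} {s : Set (Fin n)}
    (h : ∀ u ∈ s, ∀ v ∈ s, A u v = M u v) (hM : HasNegCycleOn M s) : HasNegCycleOn A s := by
  obtain ⟨m, hm, c, hinj, hmem, hnz, hprod⟩ := hM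
  have hmm : ∀ i, (i + 1) % m < m := fun i => Nat.mod_lt _ (by omega)
  refine ⟨m, hm, c, hinj, hmem, ?_, ?_⟩
  · intro i hi
    rw [h _ (hmem i hi) _ (hmem _ (hmm i))]
    exact hnz i hi
  · calc (∏ i ∈ Finset.range m, A (c i) (c ((i + 1) % m)))
        = ∏ i ∈ Finset.range m, M (c i) (c ((i + 1) % m)) := by
          refine Finset.prod_congr rfl fun i hi => ?_
          exact h _ (hmem i (Finset.mem_range.mp hi)) _ (hmem _ (hmm i))
      _ < 0 := hprod

lemma exists_neg_entry {n : ℕ} {A : Matrix (Fin n) (Fin n) ℝ} {s : Set (Fin n)}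
    (h : HasNegCycleOn A s) : ∃ u ∈ s, ∃ v ∈ s, A u v < 0 := by
  obtain ⟨m, hm, c, hinj, hmem, hnz, hprod⟩ := h
  by_contra hc
  push_neg at hc
  refine absurd hprod (not_lt.mpr (Finset.prod_nonneg fun i hi => ?_))
  have h1 := hmem i (Finset.mem_range.mp hi)
  have h2 := hmem ((i + 1) % m) (Nat.mod_lt _ (by omega))
  exact hc _ h1 _ h2

lemma tk4free_mono {n t : ℕ} {A B : Matrix (Fin n) (Fin n) ℝ}
    (h : ∀ s, IsK4Minus B s → IsK4Minus A s) (hA : TK4Free t A) : TK4Free t B := by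
  refine lt_of_le_of_lt (Set.ncard_le_ncard ?_ (Set.toFinite _)) hA
  intro s hs
  exact h s hs

lemma del_k4 {n : ℕ} {A : Matrix (Fin n) (Fin n) ℝ} {a b : Fin n} (hab : a ≠ b)
    {s : Finset (Fin n)} (h : IsK4Minus (updE A a b 0) s) : IsK4Minus A s := by
  obtain ⟨hcard, hadj, hcyc⟩ := h
  have hnotboth : ¬(a ∈ s ∧ b ∈ s) := by
    rintro ⟨ha, hb⟩
    have := hadj a ha b hb hab
    exact this (if_pos (Or.inl ⟨rfl, rfl⟩))
  have hagree : ∀ u ∈ s, ∀ v ∈ s, A u v = updE A a b 0 u v := by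
    intro u hu v hv
    refine (if_neg ?_).symm
    rintro (⟨rfl, rfl⟩ | ⟨rfl, rfl⟩)
    · exact hnotboth ⟨hu, hv⟩
    · exact hnotboth ⟨hv, hu⟩
  have hagree' : ∀ u ∈ (↑s : Set (Fin n)), ∀ v ∈ (↑s : Set (Fin n)), A u v = updE A a b 0 u v :=
    fun u hu v hv => hagree u hu v hv
  refine ⟨hcard, ?_, hasNegCycleOn_congr hagree' hcyc⟩
  intro i hi j hj hij
  rw [hagree i hi j hj]
  exact hadj i hi j hj hij

lemma tk4free_del {n t : ℕ} {A : Matrix (Fin n) (Fin n) ℝ} {a b : Fin n} (hab : a ≠ b)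
    (hA : TK4Free t A) : TK4Free t (updE A a b 0) :=
  tk4free_mono (fun _ hs => del_k4 hab hs) hA

end Aux

section Gamma

lemma gamma_symm (s n : ℕ) : (GammaSN s n).IsSymm := by
  ext i j
  simp only [Matrix.transpose_apply, GammaSN]
  exact if_congr eq_comm rfl (if_congr and_comm rfl
    (if_congr (by rw [min_comm]) rfl (if_congr (by rw [min_comm]) rfl rfl)))

lemma gamma_diag (s n : ℕ) (i : Fin n) : GammaSN s n i i = 0 := if_pos rfl

lemma gamma_entries (s n : ℕ) (i j : Fin n) :
    GammaSN s n i j = -1 ∨ GammaSN s n i j = 0 ∨ GammaSN s n i j = 1 := by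
  unfold GammaSN; split_ifs <;> norm_num

lemma gamma_signed (s n : ℕ) : IsSignedGraph (GammaSN s n) :=
  ⟨gamma_symm s n, gamma_diag s n, gamma_entries s n⟩

lemma gamma_entry_main {s n : ℕ} {i j : Fin n} (hi : i.val ≠ n - 1) (hj : j.val ≠ n - 1)
    (hij : i ≠ j) : GammaSN s n i j = 1 := by
  unfold GammaSN; rw [if_neg hij, if_pos ⟨hi, hj⟩]

lemma gamma_entry_last {s n : ℕ} {i j : Fin n} (hj : j.val = n - 1) (hi : i.val < n - 1) :
    GammaSN s n i j = (if i.val = 0 then -1 else if i.val ≤ s then 1 else 0) := by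
  have hij : i ≠ j := by intro h; rw [h] at hi; omega
  have hmin : min i.val j.val = i.val := by omega
  unfold GammaSN
  rw [if_neg hij, if_neg (by rw [hj]; simp), hmin]

lemma gamma_unbalanced {n : ℕ} (hn : 14 ≤ n) : IsUnbalanced (GammaSN 2 n) := by
  have h0 : (0:ℕ) < n := by omega
  have h1 : (1:ℕ) < n := by omega
  set i0 : Fin n := ⟨0, h0⟩
  set i1 : Fin n := ⟨1, h1⟩
  set vn : Fin n := ⟨n-1, by omega⟩
  have e01 : GammaSN 2 n i0 i1 = 1 := gamma_entry_main (by simp [i0]; omega) (by simp [i1]; omega)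
    (by simp [i0, i1, Fin.ext_iff])
  have e1n : GammaSN 2 n i1 vn = 1 := by
    rw [gamma_entry_last (by simp [vn]) (by simp [i1]; omega)]
    norm_num [i1]
  have en0 : GammaSN 2 n vn i0 = -1 := by
    rw [(gamma_symm 2 n).apply i0 vn, gamma_entry_last (by simp [vn]) (by simp [i0]; omega)]
    norm_num [i0]
  exact triangle_negcycle (a := i0) (b := i1) (c := vn) _ (by simp [i0, i1, Fin.ext_iff])
    (by simp [i1, vn, Fin.ext_iff]; omega)
    (by simp [i0, vn, Fin.ext_iff]; omega) (by rw [e01]; norm_num) (by rw [e1n]; norm_num)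
    (by rw [en0]; norm_num) (by rw [e01, e1n, en0]; norm_num)
    (Set.mem_univ _) (Set.mem_univ _) (Set.mem_univ _)

lemma gamma_tk4free {n t : ℕ} (hn : 14 ≤ n) (ht : 2 ≤ t) : TK4Free t (GammaSN 2 n) := by
  have hvn : (n:ℕ) - 1 < n := by omega
  set vn : Fin n := ⟨n-1, hvn⟩ with hvndef
  set S0 : Finset (Fin n) := {⟨0, by omega⟩, ⟨1, by omega⟩, ⟨2, by omega⟩, vn} with hS0
  have hsub : {s : Finset (Fin n) | IsK4Minus (GammaSN 2 n) s} ⊆ {S0} := by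
    intro s hs
    obtain ⟨hcard, hadj, hcyc⟩ := hs
    by_cases hvns : vn ∈ s
    · have hmem : ∀ w ∈ s, w.val ≤ 2 ∨ w = vn := by
        intro w hw
        by_cases hwvn : w = vn
        · exact Or.inr hwvn
        left
        have hwval : w.val < n - 1 := by
          have h1 : w.val ≠ n - 1 := fun h => hwvn (Fin.ext (by rw [h]))
          have := w.isLt; omega
        have hnz := hadj w hw vn hvns hwvn
        rw [gamma_entry_last rfl hwval] at hnz
        by_contra hgt
        push_neg at hgt
        rw [if_neg (by omega), if_neg (by omega)] at hnz
        exact hnz rfl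
      have hsubS0 : s ⊆ S0 := by
        intro u hu
        rcases hmem u hu with h | h
        · have h' : u.val = 0 ∨ u.val = 1 ∨ u.val = 2 := by omega
          rcases h' with h' | h' | h' <;>
            simp [hS0, Finset.mem_insert, Fin.ext_iff, h']
        · simp [hS0, Finset.mem_insert, h]
      have hcardS0 : S0.card ≤ 4 := by
        rw [hS0]
        apply le_trans (Finset.card_insert_le _ _)
        apply Nat.succ_le_succ
        apply le_trans (Finset.card_insert_le _ _)
        apply Nat.succ_le_succ
        apply le_trans (Finset.card_insert_le _ _)
        simp
      have heq := Finset.eq_of_subset_of_card_le hsubS0 (by omega)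
      exact heq
    · exfalso
      obtain ⟨u, hu, v, hv, hneg⟩ := exists_neg_entry hcyc
      have huval : u.val ≠ n - 1 := fun h => hvns (by rw [← show u = vn from Fin.ext h]; exact hu)
      have hvval : v.val ≠ n - 1 := fun h => hvns (by rw [← show v = vn from Fin.ext h]; exact hv)
      by_cases huv : u = v
      · rw [huv, gamma_diag] at hneg; exact lt_irrefl 0 hneg
      · rw [gamma_entry_main huval hvval huv] at hneg; norm_num at hneg
  have h1 : {s : Finset (Fin n) | IsK4Minus (GammaSN 2 n) s}.ncard ≤ 1 := by
    refine le_trans (Set.ncard_le_ncard hsub (Set.finite_singleton _)) ?_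
    simp
  exact lt_of_le_of_lt h1 (by omega)

lemma gamma_lambda {n : ℕ} (hn : 14 ≤ n) : (n:ℝ) - 2 < lambdaMax (GammaSN 2 n) := by
  have h0 : (0:ℕ) < n := by omega
  have hnR : (14:ℝ) ≤ (n:ℝ) := by exact_mod_cast hn
  set i0 : Fin n := ⟨0, h0⟩ with hi0
  set i1 : Fin n := ⟨1, by omega⟩ with hi1
  set i2 : Fin n := ⟨2, by omega⟩ with hi2
  set vn : Fin n := ⟨n-1, by omega⟩ with hvn
  have hne01 : i0 ≠ i1 := by simp [hi0, hi1, Fin.ext_iff]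
  have hne02 : i0 ≠ i2 := by simp [hi0, hi2, Fin.ext_iff]
  have hne12 : i1 ≠ i2 := by simp [hi1, hi2, Fin.ext_iff]
  have hne0n : i0 ≠ vn := by simp [hi0, hvn, Fin.ext_iff]; omega
  have hne1n : i1 ≠ vn := by simp [hi1, hvn, Fin.ext_iff]; omega
  have hne2n : i2 ≠ vn := by simp [hi2, hvn, Fin.ext_iff]; omega
  set z : Fin n → ℝ := fun i => if i = vn then 1 else (n:ℝ) with hzdef
  set w : Fin n → ℝ := fun i =>
    (if i = i0 then (-1:ℝ) else 0) + (if i = i1 then 1 else 0) + (if i = i2 then 1 else 0)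
    with hwdef
  have hw0 : w i0 = -1 := by simp [hwdef, hne01, hne02]
  have hw1 : w i1 = 1 := by simp [hwdef, hne01.symm, hne12]
  have hw2 : w i2 = 1 := by simp [hwdef, hne02.symm, hne12.symm]
  have hwo : ∀ i, i ≠ i0 → i ≠ i1 → i ≠ i2 → w i = 0 := by
    intro i a b c; simp [hwdef, a, b, c]
  have hwvn : w vn = 0 := hwo vn hne0n.symm hne1n.symm hne2n.symm
  have hval_ne : ∀ i : Fin n, i ≠ vn → i.val < n - 1 := by
    intro i hi
    have h1 : i.val ≠ n - 1 := fun h => hi (Fin.ext (by rw [h]))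
    have := i.isLt; omega
  have hWlast : ∀ i : Fin n, i ≠ vn → GammaSN 2 n i vn = w i := by
    intro i hi
    rw [gamma_entry_last rfl (hval_ne i hi)]
    by_cases h0' : i.val = 0
    · rw [if_pos h0', show i = i0 from Fin.ext h0', hw0]
    · by_cases h1' : i.val = 1
      · rw [if_neg h0', if_pos (by omega), show i = i1 from Fin.ext h1', hw1]
      · by_cases h2' : i.val = 2
        · rw [if_neg h0', if_pos (by omega), show i = i2 from Fin.ext h2', hw2]
        · rw [if_neg h0', if_neg (by omega)]
          rw [hwo i (fun h => h0' (by rw [h])) (fun h => h1' (by rw [h]))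
            (fun h => h2' (by rw [h]))]
  have hz_other : ∀ i : Fin n, i ≠ vn → z i = (n:ℝ) := by
    intro i hi; simp [hzdef, hi]
  have hz_vn : z vn = 1 := by simp [hzdef]
  have hWrow : ∀ i : Fin n, i ≠ vn → ∀ j : Fin n,
      GammaSN 2 n i j * z j
        = (n:ℝ) + (if j = i then -(n:ℝ) else 0) + (if j = vn then (w i - n) else 0) := by
    intro i hi j
    by_cases hji : j = i
    · rw [hji, gamma_diag, if_pos rfl, if_neg hi, hz_other i hi]
      ring
    · by_cases hjvn : j = vn
      · rw [hjvn, hWlast i hi, hz_vn, if_neg (fun h : vn = i => hi h.symm), if_pos rfl]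
        ring
      · rw [gamma_entry_main (by have := hval_ne i hi; omega) (by have := hval_ne j hjvn; omega)
          (fun h => hji h.symm), hz_other j hjvn, if_neg hji, if_neg hjvn]
        ring
  have hrow_sum : ∀ i : Fin n, i ≠ vn →
      (GammaSN 2 n *ᵥ z) i = (n:ℝ) * ((n:ℝ) - 2) + w i := by
    intro i hi
    show (∑ j, GammaSN 2 n i j * z j) = _
    rw [Finset.sum_congr rfl (fun j _ => hWrow i hi j)]
    rw [Finset.sum_add_distrib, Finset.sum_add_distrib, Finset.sum_const,
      Finset.sum_ite_eq' Finset.univ i (fun _ => -(n:ℝ)),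
      Finset.sum_ite_eq' Finset.univ vn (fun _ => w i - (n:ℝ))]
    simp only [Finset.mem_univ, if_pos, Finset.card_univ, Fintype.card_fin, nsmul_eq_mul]
    ring
  have hrow_vn : (GammaSN 2 n *ᵥ z) vn = (n:ℝ) := by
    show (∑ j, GammaSN 2 n vn j * z j) = _
    have key : ∀ j : Fin n, GammaSN 2 n vn j * z j
        = (if j = i0 then -(n:ℝ) else 0) + (if j = i1 then (n:ℝ) else 0)
          + (if j = i2 then (n:ℝ) else 0) := by
      intro j
      by_cases hjvn : j = vn
      · rw [hjvn, gamma_diag, if_neg hne0n.symm, if_neg hne1n.symm, if_neg hne2n.symm]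
        ring
      · rw [(gamma_symm 2 n).apply j vn, hWlast j hjvn, hz_other j hjvn]
        by_cases hj0 : j = i0
        · rw [hj0, hw0, if_pos rfl, if_neg hne01, if_neg hne02]; ring
        · by_cases hj1 : j = i1
          · rw [hj1, hw1, if_neg hne01.symm, if_pos rfl, if_neg hne12]; ring
          · by_cases hj2 : j = i2
            · rw [hj2, hw2, if_neg hne02.symm, if_neg hne12.symm, if_pos rfl]; ring
            · rw [hwo j hj0 hj1 hj2, if_neg hj0, if_neg hj1, if_neg hj2]; ring
    rw [Finset.sum_congr rfl (fun j _ => key j)]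
    rw [Finset.sum_add_distrib, Finset.sum_add_distrib,
      Finset.sum_ite_eq' Finset.univ i0 (fun _ => -(n:ℝ)),
      Finset.sum_ite_eq' Finset.univ i1 (fun _ => (n:ℝ)),
      Finset.sum_ite_eq' Finset.univ i2 (fun _ => (n:ℝ))]
    simp only [Finset.mem_univ, if_pos]
    ring
  have hcast : ((n - 1 : ℕ) : ℝ) = (n:ℝ) - 1 := by
    have h1 : (1:ℕ) ≤ n := by omega
    push_cast [h1]; ring
  have hwsum : ∑ i ∈ Finset.univ.erase vn, w i = 1 := by
    have htot : ∑ i, w i = 1 := by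
      rw [hwdef]
      rw [Finset.sum_add_distrib, Finset.sum_add_distrib,
        Finset.sum_ite_eq' Finset.univ i0 (fun _ => (-1:ℝ)),
        Finset.sum_ite_eq' Finset.univ i1 (fun _ => (1:ℝ)),
        Finset.sum_ite_eq' Finset.univ i2 (fun _ => (1:ℝ))]
      simp only [Finset.mem_univ, if_pos]
      ring
    rw [← Finset.add_sum_erase _ w (Finset.mem_univ vn), hwvn] at htot
    linarith
  have hcard_erase : (Finset.univ.erase vn).card = n - 1 := by
    rw [Finset.card_erase_of_mem (Finset.mem_univ _), Finset.card_univ, Fintype.card_fin]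
  have htotal : z ⬝ᵥ GammaSN 2 n *ᵥ z
      = (n:ℝ)^2 * ((n:ℝ)-1) * ((n:ℝ)-2) + 2*(n:ℝ) := by
    show (∑ i, z i * (GammaSN 2 n *ᵥ z) i) = _
    rw [← Finset.add_sum_erase _ _ (Finset.mem_univ vn), hz_vn, hrow_vn]
    have herase : ∀ i ∈ Finset.univ.erase vn,
        z i * (GammaSN 2 n *ᵥ z) i = (n:ℝ) * ((n:ℝ) * ((n:ℝ) - 2)) + (n:ℝ) * w i := by
      intro i hi
      have hine := Finset.ne_of_mem_erase hi
      rw [hz_other i hine, hrow_sum i hine]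
      ring
    rw [Finset.sum_congr rfl herase, Finset.sum_add_distrib, Finset.sum_const, ← Finset.mul_sum,
      hwsum, hcard_erase, nsmul_eq_mul, hcast]
    ring
  have hzz : z ⬝ᵥ z = ((n:ℝ)-1) * (n:ℝ)^2 + 1 := by
    show (∑ i, z i * z i) = _
    rw [← Finset.add_sum_erase _ _ (Finset.mem_univ vn), hz_vn]
    have herase : ∀ i ∈ Finset.univ.erase vn, z i * z i = (n:ℝ)^2 := by
      intro i hi
      rw [hz_other i (Finset.ne_of_mem_erase hi)]; ring
    rw [Finset.sum_congr rfl herase, Finset.sum_const, hcard_erase, nsmul_eq_mul, hcast]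
    ring
  have hray := rayleigh_le (gamma_symm 2 n) z
  rw [htotal, hzz] at hray
  by_contra hcon
  push_neg at hcon
  have h2 : lambdaMax (GammaSN 2 n) * (((n:ℝ)-1) * (n:ℝ)^2 + 1)
      ≤ ((n:ℝ) - 2) * (((n:ℝ)-1) * (n:ℝ)^2 + 1) := by
    apply mul_le_mul_of_nonneg_right hcon
    nlinarith
  nlinarith

end Gamma

set_option maxHeartbeats 3200000 in
theorem extremal_exactly_one_negative_edge (t r : ℕ) (ht : 2 ≤ t)
    (hr : (r : ℝ) = (1 + Real.sqrt (8 * (t : ℝ) - 7)) / 2) :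
    ∃ N : ℕ, ∀ n : ℕ, ∀ _hn : N + 4 ≤ n, t ≤ (n - 2).choose 2 →
      ∀ (A : Matrix (Fin n) (Fin n) ℝ) (x : Fin n → ℝ),
        IsSignedGraph A → IsUnbalanced A → TK4Free t A →
        (∀ B : Matrix (Fin n) (Fin n) ℝ,
          IsSignedGraph B → IsUnbalanced B → TK4Free t B → lambdaMax B ≤ lambdaMax A) →
        (∀ i, 0 ≤ x i) → (∑ i, x i ^ 2) = 1 → A.mulVec x = lambdaMax A • x →
        let v1 : Fin n := ⟨0, by omega⟩
        let v2 : Fin n := ⟨1, by omega⟩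
        let vn : Fin n := ⟨n - 1, by omega⟩
        A v1 v2 ≠ 0 → A v2 vn ≠ 0 → A vn v1 ≠ 0 →
        A v1 v2 * A v2 vn * A vn v1 < 0 →
        {p : Fin n × Fin n | p.1 < p.2 ∧ A p.1 p.2 < 0}.ncard = 1 := by
  classical
  refine ⟨10, ?_⟩
  intro n hn _htn A x hsg hunb hfree hmax hx hx2 heig v1 v2 vn h12 h2n hn1 htri
  have hn14 : 14 ≤ n := by omega
  have hnR : (14:ℝ) ≤ (n:ℝ) := by exact_mod_cast hn14
  have hsymm := hsg.1
  have hdiag := hsg.2.1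
  have hent := hsg.2.2
  have hv1val : v1.val = 0 := rfl
  have hv2val : v2.val = 1 := rfl
  have hvnval : vn.val = n - 1 := rfl
  have hlt12 : v1 < v2 := by rw [Fin.lt_def, hv1val, hv2val]; omega
  have hlt2n : v2 < vn := by rw [Fin.lt_def, hv2val, hvnval]; omega
  have hlt1n : v1 < vn := by rw [Fin.lt_def, hv1val, hvnval]; omega
  have hv12 : v1 ≠ v2 := ne_of_lt hlt12
  have hv2n : v2 ≠ vn := ne_of_lt hlt2n
  have hv1n : v1 ≠ vn := ne_of_lt hlt1n
  set lam := lambdaMax A with hlamdef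
  have hsym2 : ∀ i j : Fin n, A i j = A j i := fun i j => hsymm.apply j i
  have hAx : ∀ i, (A *ᵥ x) i = lam * x i := by
    intro i
    rw [heig]
    simp
  have hxx : x ⬝ᵥ x = 1 := by
    have h1 : x ⬝ᵥ x = ∑ i, x i ^ 2 := by simp [dotProduct, pow_two]
    rw [h1, hx2]
  have hquadA : x ⬝ᵥ A *ᵥ x = lam := by
    rw [heig, dotProduct_smul, hxx]
    simp
  have hlam_gt : (n:ℝ) - 2 < lam :=
    lt_of_lt_of_le (gamma_lambda hn14)
      (hmax _ (gamma_signed 2 n) (gamma_unbalanced hn14) (gamma_tk4free hn14 ht))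
  have hlam_pos : 0 < lam := by linarith
  -- no two distinct vertices can both have zero eigenvector entry
  have hNoTwo : ∀ a b : Fin n, a ≠ b → x a = 0 → x b = 0 → False := by
    intro a b hab hxa hxb
    set s : Finset (Fin n) := (Finset.univ.erase a).erase b with hsdef
    have hbs : b ∈ Finset.univ.erase a := Finset.mem_erase.mpr ⟨Ne.symm hab, Finset.mem_univ _⟩
    have hcards : s.card = n - 2 := by
      rw [hsdef, Finset.card_erase_of_mem hbs, Finset.card_erase_of_mem (Finset.mem_univ _),
        Finset.card_univ, Fintype.card_fin]
      omega
    have hcardsR : (s.card : ℝ) = (n:ℝ) - 2 := by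
      rw [hcards]
      have h2 : (2:ℕ) ≤ n := by omega
      push_cast [h2]
      ring
    have hzero : ∀ j, j ∉ s → x j = 0 := by
      intro j hj
      rw [hsdef] at hj
      have hj' : j = b ∨ j = a := by
        by_contra hcon
        push_neg at hcon
        exact hj (Finset.mem_erase.mpr ⟨hcon.1, Finset.mem_erase.mpr
          ⟨hcon.2, Finset.mem_univ _⟩⟩)
      rcases hj' with h | h
      · rw [h]; exact hxb
      · rw [h]; exact hxa
    set S := ∑ j ∈ s, x j with hSdef
    have hkey1 : ∀ i, lam * x i ≤ S := by
      intro i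
      rw [← hAx i]
      have hswap : (A *ᵥ x) i = ∑ j, A i j * x j := rfl
      rw [hswap]
      have hterm : ∀ j : Fin n, A i j * x j ≤ (if j ∈ s then x j else 0) := by
        intro j
        by_cases hjs : j ∈ s
        · rw [if_pos hjs]
          have h1 : A i j ≤ 1 := by rcases hent i j with h|h|h <;> rw [h] <;> norm_num
          nlinarith [hx j]
        · rw [if_neg hjs, hzero j hjs, mul_zero]
      calc (∑ j, A i j * x j) ≤ ∑ j, (if j ∈ s then x j else 0) :=
            Finset.sum_le_sum fun j _ => hterm j
        _ = S := by rw [Finset.sum_ite_mem, Finset.univ_inter]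
    have hkey2 : S^2 ≤ ((n:ℝ) - 2) := by
      have h1 : S^2 ≤ (s.card : ℝ) * ∑ j ∈ s, x j ^ 2 := sq_sum_le_card_mul_sum_sq
      rw [hcardsR] at h1
      have h2 : ∑ j ∈ s, x j ^2 ≤ 1 := by
        rw [← hx2]
        exact Finset.sum_le_sum_of_subset_of_nonneg (Finset.subset_univ s)
          (fun i _ _ => sq_nonneg _)
      nlinarith [h1, h2]
    have hlamsum : lam^2 = ∑ i, (lam * x i)^2 := by
      have h1 : ∀ i : Fin n, (lam * x i)^2 = lam^2 * x i ^2 := fun i => by ring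
      simp only [h1]
      rw [← Finset.mul_sum, hx2, mul_one]
    have hsum_sub : ∑ i, (lam * x i)^2 = ∑ i ∈ s, (lam * x i)^2 := by
      symm
      apply Finset.sum_subset (Finset.subset_univ s)
      intro i _ hi
      rw [hzero i hi]
      ring
    have hbound : ∀ i ∈ s, (lam * x i)^2 ≤ S^2 := by
      intro i _
      have h0 : 0 ≤ lam * x i := mul_nonneg hlam_pos.le (hx i)
      nlinarith [hkey1 i]
    have hlam2 : lam^2 ≤ ((n:ℝ)-2)^2 := by
      calc lam^2 = ∑ i ∈ s, (lam * x i)^2 := by rw [hlamsum, hsum_sub]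
        _ ≤ ∑ _i ∈ s, S^2 := Finset.sum_le_sum hbound
        _ = (s.card : ℝ) * S^2 := by rw [Finset.sum_const, nsmul_eq_mul]
        _ ≤ ((n:ℝ)-2) * ((n:ℝ)-2) := by
            rw [hcardsR]
            have h0 : (0:ℝ) ≤ (n:ℝ) - 2 := by linarith
            nlinarith [sq_nonneg S, hkey2]
        _ = ((n:ℝ)-2)^2 := by ring
    nlinarith [mul_pos (sub_pos.mpr hlam_gt) (by linarith : (0:ℝ) < lam + ((n:ℝ)-2))]
  -- contradiction engine 1 : a strictly larger Rayleigh quotient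
  have engine1 : ∀ B : Matrix (Fin n) (Fin n) ℝ, IsSignedGraph B → IsUnbalanced B →
      TK4Free t B → lam < x ⬝ᵥ B *ᵥ x → False := by
    intro B hBs hBu hBf hgt
    have h1 := rayleigh_le hBs.1 x
    rw [hxx, mul_one] at h1
    exact absurd (le_trans h1 (hmax B hBs hBu hBf)) (not_le.mpr hgt)
  -- contradiction engine 2 : perturbation at a zero coordinate
  have engine2 : ∀ B : Matrix (Fin n) (Fin n) ℝ, IsSignedGraph B → IsUnbalanced B →
      TK4Free t B → ∀ a : Fin n, x ⬝ᵥ B *ᵥ x = lam → B a a = 0 → 0 < (B *ᵥ x) a →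
      x a = 0 → False := by
    intro B hBs hBu hBf a hquad hBaa hpos hxa
    set δ : ℝ := (B *ᵥ x) a / lam with hδ
    have hδpos : 0 < δ := div_pos hpos hlam_pos
    have hray := rayleigh_le hBs.1 (x + Pi.single a δ)
    rw [perturb_quad hBs.1 x a δ, perturb_norm x a δ, hxx, hquad, hBaa, hxa] at hray
    have hmaxB := hmax B hBs hBu hBf
    have h2 : lambdaMax B * (1 + 2*δ*0 + δ^2) ≤ lam * (1 + 2*δ*0 + δ^2) :=
      mul_le_mul_of_nonneg_right hmaxB (by nlinarith [sq_nonneg δ])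
    have hld : lam * δ^2 = δ * (B *ᵥ x) a := by
      rw [hδ]
      field_simp
    nlinarith [mul_pos hδpos hpos, h2, hld, hray]
  -- every negative entry lies on the distinguished triangle
  have core : ∀ a b : Fin n, a ≠ b → A a b = -1 →
      ¬((a = v1 ∧ b = v2) ∨ (a = v2 ∧ b = v1) ∨ (a = v2 ∧ b = vn) ∨ (a = vn ∧ b = v2) ∨
        (a = v1 ∧ b = vn) ∨ (a = vn ∧ b = v1)) → False := by
    intro a b hab hneg hnp
    have hBsymm : (updE A a b 0).IsSymm := updE_isSymm hsymm a b 0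
    have hBsigned : IsSignedGraph (updE A a b 0) :=
      ⟨hBsymm, fun i => by rw [updE_diag A hab 0 i, hdiag],
        updE_entries hent a b (Or.inr (Or.inl rfl))⟩
    have hpres12 : updE A a b 0 v1 v2 = A v1 v2 := by
      apply updE_apply_of_ne
      rintro (⟨h1, h2⟩ | ⟨h1, h2⟩)
      · exact hnp (Or.inl ⟨h1.symm, h2.symm⟩)
      · exact hnp (Or.inr (Or.inl ⟨h2.symm, h1.symm⟩))
    have hpres2n : updE A a b 0 v2 vn = A v2 vn := by
      apply updE_apply_of_ne
      rintro (⟨h1, h2⟩ | ⟨h1, h2⟩)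
      · exact hnp (Or.inr (Or.inr (Or.inl ⟨h1.symm, h2.symm⟩)))
      · exact hnp (Or.inr (Or.inr (Or.inr (Or.inl ⟨h2.symm, h1.symm⟩))))
    have hpresn1 : updE A a b 0 vn v1 = A vn v1 := by
      apply updE_apply_of_ne
      rintro (⟨h1, h2⟩ | ⟨h1, h2⟩)
      · exact hnp (Or.inr (Or.inr (Or.inr (Or.inr (Or.inr ⟨h1.symm, h2.symm⟩)))))
      · exact hnp (Or.inr (Or.inr (Or.inr (Or.inr (Or.inl ⟨h2.symm, h1.symm⟩)))))
    have hBunb : IsUnbalanced (updE A a b 0) :=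
      triangle_negcycle (a := v1) (b := v2) (c := vn) _ hv12 hv2n hv1n
        (by rw [hpres12]; exact h12) (by rw [hpres2n]; exact h2n) (by rw [hpresn1]; exact hn1)
        (by rw [hpres12, hpres2n, hpresn1]; exact htri)
        (Set.mem_univ _) (Set.mem_univ _) (Set.mem_univ _)
    have hBfree : TK4Free t (updE A a b 0) := tk4free_del hab hfree
    have hquadB : x ⬝ᵥ (updE A a b 0) *ᵥ x = lam + 2 * (x a * x b) := by
      rw [quad_updE A hab 0 x, hquadA, hsym2 b a, hneg]
      ring
    by_cases hxa : x a = 0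
    · by_cases hxb : x b = 0
      · exact hNoTwo a b hab hxa hxb
      · refine engine2 _ hBsigned hBunb hBfree a ?_ ?_ ?_ hxa
        · rw [hquadB, hxa]; ring
        · rw [updE_diag A hab 0 a, hdiag]
        · rw [mulVec_updE_fst A hab 0 x, hAx a, hxa, hneg]
          have hxb' : 0 < x b := lt_of_le_of_ne (hx b) (Ne.symm hxb)
          linarith
    · have hxa' : 0 < x a := lt_of_le_of_ne (hx a) (Ne.symm hxa)
      by_cases hxb : x b = 0
      · refine engine2 _ hBsigned hBunb hBfree b ?_ ?_ ?_ hxb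
        · rw [hquadB, hxb]; ring
        · rw [updE_diag A hab 0 b, hdiag]
        · rw [updE_comm A a b 0, mulVec_updE_fst A (Ne.symm hab) 0 x, hAx b, hxb,
            hsym2 b a, hneg]
          linarith
      · have hxb' : 0 < x b := lt_of_le_of_ne (hx b) (Ne.symm hxb)
        refine engine1 _ hBsigned hBunb hBfree ?_
        rw [hquadB]
        nlinarith
  have hneg_tri : ∀ a b : Fin n, A a b < 0 →
      ((a = v1 ∧ b = v2) ∨ (a = v2 ∧ b = v1) ∨ (a = v2 ∧ b = vn) ∨ (a = vn ∧ b = v2) ∨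
        (a = v1 ∧ b = vn) ∨ (a = vn ∧ b = v1)) := by
    intro a b hneg
    have hab : a ≠ b := by
      rintro rfl
      rw [hdiag] at hneg
      exact lt_irrefl 0 hneg
    have hneg1 : A a b = -1 := by
      rcases hent a b with h | h | h
      · exact h
      · rw [h] at hneg; norm_num at hneg
      · rw [h] at hneg; norm_num at hneg
    by_contra hnp
    exact core a b hab hneg1 hnp
  -- the all-negative triangle case is impossible
  have hallneg : A v1 v2 = -1 → A v2 vn = -1 → A vn v1 = -1 → False := by
    intro e12 e2n en1
    set B1 := updE A v1 v2 1 with hB1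
    set B := updE B1 v2 vn 1 with hB
    have hB1symm := updE_isSymm hsymm v1 v2 1
    have hBsymm := updE_isSymm hB1symm v2 vn 1
    have hBsigned : IsSignedGraph B :=
      ⟨hBsymm, fun i => by rw [hB, updE_diag B1 hv2n 1 i, hB1, updE_diag A hv12 1 i, hdiag],
        updE_entries (updE_entries hent v1 v2 (Or.inr (Or.inr rfl))) v2 vn
          (Or.inr (Or.inr rfl))⟩
    have hB1_12 : B1 v1 v2 = 1 := by
      rw [hB1]; exact updE_apply_of_pos _ _ _ _ (Or.inl ⟨rfl, rfl⟩)
    have hB1_2n : B1 v2 vn = A v2 vn := by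
      rw [hB1]
      apply updE_apply_of_ne
      rintro (⟨h1, h2⟩ | ⟨h1, h2⟩)
      · exact hv12 h1.symm
      · exact hv1n h2.symm
    have hB1_n2 : B1 vn v2 = A vn v2 := by
      rw [hB1]
      apply updE_apply_of_ne
      rintro (⟨h1, h2⟩ | ⟨h1, h2⟩)
      · exact hv1n h1.symm
      · exact hv2n h1.symm
    have hB1_n1 : B1 vn v1 = A vn v1 := by
      rw [hB1]
      apply updE_apply_of_ne
      rintro (⟨h1, h2⟩ | ⟨h1, h2⟩)
      · exact hv1n h1.symm
      · exact hv2n h1.symm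
    have hB_12 : B v1 v2 = 1 := by
      rw [hB, updE_apply_of_ne _ _ _ _ ?_, hB1_12]
      rintro (⟨h1, h2⟩ | ⟨h1, h2⟩)
      · exact hv12 h1
      · exact hv1n h1
    have hB_2n : B v2 vn = 1 := by
      rw [hB]; exact updE_apply_of_pos _ _ _ _ (Or.inl ⟨rfl, rfl⟩)
    have hB_n1 : B vn v1 = A vn v1 := by
      rw [hB, updE_apply_of_ne _ _ _ _ ?_, hB1_n1]
      rintro (⟨h1, h2⟩ | ⟨h1, h2⟩)
      · exact hv2n h1.symm
      · exact hv12 h2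
    have hBunb : IsUnbalanced B :=
      triangle_negcycle (a := v1) (b := v2) (c := vn) _ hv12 hv2n hv1n
        (by rw [hB_12]; norm_num) (by rw [hB_2n]; norm_num)
        (by rw [hB_n1, en1]; norm_num)
        (by rw [hB_12, hB_2n, hB_n1, en1]; norm_num)
        (Set.mem_univ _) (Set.mem_univ _) (Set.mem_univ _)
    have hBneg : ∀ i j : Fin n, B i j < 0 → (i = v1 ∧ j = vn) ∨ (i = vn ∧ j = v1) := by
      intro i j hlt
      by_cases h1 : (i = v2 ∧ j = vn) ∨ (i = vn ∧ j = v2)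
      · rw [hB, updE_apply_of_pos _ _ _ _ h1] at hlt; norm_num at hlt
      · rw [hB, updE_apply_of_ne _ _ _ _ h1] at hlt
        by_cases h2 : (i = v1 ∧ j = v2) ∨ (i = v2 ∧ j = v1)
        · rw [hB1, updE_apply_of_pos _ _ _ _ h2] at hlt; norm_num at hlt
        · rw [hB1, updE_apply_of_ne _ _ _ _ h2] at hlt
          rcases hneg_tri i j hlt with h | h | h | h | h | h
          · exact absurd (Or.inl h) h2
          · exact absurd (Or.inr h) h2
          · exact absurd (Or.inl h) h1
          · exact absurd (Or.inr h) h1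
          · exact Or.inl h
          · exact Or.inr h
    have hsupp : ∀ i j : Fin n, B i j ≠ 0 → A i j ≠ 0 := by
      intro i j hne
      by_cases h1 : (i = v2 ∧ j = vn) ∨ (i = vn ∧ j = v2)
      · rcases h1 with ⟨h1a, h1b⟩ | ⟨h1a, h1b⟩
        · rw [h1a, h1b, e2n]; norm_num
        · rw [h1a, h1b, hsym2 vn v2, e2n]; norm_num
      · by_cases h2 : (i = v1 ∧ j = v2) ∨ (i = v2 ∧ j = v1)
        · rcases h2 with ⟨h2a, h2b⟩ | ⟨h2a, h2b⟩
          · rw [h2a, h2b, e12]; norm_num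
          · rw [h2a, h2b, hsym2 v2 v1, e12]; norm_num
        · rw [hB, updE_apply_of_ne _ _ _ _ h1, hB1, updE_apply_of_ne _ _ _ _ h2] at hne
          exact hne
    have hBfree : TK4Free t B := by
      refine tk4free_mono ?_ hfree
      intro s hs
      obtain ⟨hcard, hadjB, hcycB⟩ := hs
      have hAadj : ∀ i ∈ s, ∀ j ∈ s, i ≠ j → A i j ≠ 0 :=
        fun i hi j hj hij => hsupp i j (hadjB i hi j hj hij)
      obtain ⟨u, hu, v, hv, hneg'⟩ := exists_neg_entry hcycB
      have hv1s : v1 ∈ s ∧ vn ∈ s := by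
        rcases hBneg u v hneg' with ⟨h1, h2⟩ | ⟨h1, h2⟩
        · exact ⟨Finset.mem_coe.mp (h1 ▸ hu), Finset.mem_coe.mp (h2 ▸ hv)⟩
        · exact ⟨Finset.mem_coe.mp (h2 ▸ hv), Finset.mem_coe.mp (h1 ▸ hu)⟩
      have hex : ∃ w ∈ s, w ∉ ({v1, v2, vn} : Finset (Fin n)) := by
        by_contra hcon
        push_neg at hcon
        have hsub3 : s ⊆ {v1, v2, vn} := fun u hu => hcon u hu
        have h3 : ({v1, v2, vn} : Finset (Fin n)).card ≤ 3 := by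
          apply le_trans (Finset.card_insert_le _ _)
          apply Nat.succ_le_succ
          apply le_trans (Finset.card_insert_le _ _)
          simp
        have h4 := Finset.card_le_card hsub3
        omega
      obtain ⟨w, hws, hwn⟩ := hex
      have hw1 : w ≠ v1 := fun h => hwn (by rw [h]; simp)
      have hw2 : w ≠ v2 := fun h => hwn (by rw [h]; simp)
      have hwvn : w ≠ vn := fun h => hwn (by rw [h]; simp)
      have hA1w : A v1 w = 1 := by
        have hne := hAadj v1 hv1s.1 w hws (Ne.symm hw1)
        rcases hent v1 w with h | h | h
        · exfalso
          rcases hneg_tri v1 w (by rw [h]; norm_num) with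
            ⟨h1, h2⟩ | ⟨h1, h2⟩ | ⟨h1, h2⟩ | ⟨h1, h2⟩ | ⟨h1, h2⟩ | ⟨h1, h2⟩
          · exact hw2 h2
          · exact hv12 h1
          · exact hv12 h1
          · exact hv1n h1
          · exact hwvn h2
          · exact hv1n h1
        · exact absurd h hne
        · exact h
      have hAwn : A w vn = 1 := by
        have hne := hAadj w hws vn hv1s.2 hwvn
        rcases hent w vn with h | h | h
        · exfalso
          rcases hneg_tri w vn (by rw [h]; norm_num) with
            ⟨h1, h2⟩ | ⟨h1, h2⟩ | ⟨h1, h2⟩ | ⟨h1, h2⟩ | ⟨h1, h2⟩ | ⟨h1, h2⟩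
          · exact hv2n h2.symm
          · exact hw2 h1
          · exact hw2 h1
          · exact hwvn h1
          · exact hw1 h1
          · exact hwvn h1
        · exact absurd h hne
        · exact h
      have hcycA : HasNegCycleOn A ↑s :=
        triangle_negcycle (a := v1) (b := w) (c := vn) _ (Ne.symm hw1) hwvn hv1n
          (by rw [hA1w]; norm_num) (by rw [hAwn]; norm_num) (by rw [en1]; norm_num)
          (by rw [hA1w, hAwn, en1]; norm_num)
          (Finset.mem_coe.mpr hv1s.1) (Finset.mem_coe.mpr hws) (Finset.mem_coe.mpr hv1s.2)
      exact ⟨hcard, hAadj, hcycA⟩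
    have hB1quad : x ⬝ᵥ B1 *ᵥ x = lam + 4 * (x v1 * x v2) := by
      rw [hB1, quad_updE A hv12 1 x, hquadA, hsym2 v2 v1, e12]
      ring
    have hBquad : x ⬝ᵥ B *ᵥ x = lam + 4 * (x v1 * x v2) + 4 * (x v2 * x vn) := by
      rw [hB, quad_updE B1 hv2n 1 x, hB1quad, hB1_2n, hB1_n2, hsym2 vn v2, e2n]
      ring
    by_cases hx2' : x v2 = 0
    · have hxv1 : 0 < x v1 := by
        rcases (hx v1).eq_or_lt with h | h
        · exact absurd h.symm (fun hh => hNoTwo v2 v1 (Ne.symm hv12) hx2' hh)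
        · exact h
      have hxvn : 0 < x vn := by
        rcases (hx vn).eq_or_lt with h | h
        · exact absurd h.symm (fun hh => hNoTwo v2 vn hv2n hx2' hh)
        · exact h
      refine engine2 B hBsigned hBunb hBfree v2 ?_ ?_ ?_ hx2'
      · rw [hBquad, hx2']; ring
      · rw [hB, updE_diag B1 hv2n 1 v2, hB1, updE_diag A hv12 1 v2, hdiag]
      · rw [hB, mulVec_updE_fst B1 hv2n 1 x, hB1_2n, e2n]
        have hB1v2 : (B1 *ᵥ x) v2 = lam * x v2 + 2 * x v1 := by
          rw [hB1, updE_comm A v1 v2 1, mulVec_updE_fst A (Ne.symm hv12) 1 x, hAx v2,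
            hsym2 v2 v1, e12]
          ring
        rw [hB1v2, hx2']
        linarith
    · have hx2pos : 0 < x v2 := lt_of_le_of_ne (hx v2) (Ne.symm hx2')
      have hsum : 0 < x v1 + x vn := by
        rcases (hx v1).eq_or_lt with h1 | h1
        · rcases (hx vn).eq_or_lt with h2 | h2
          · exact absurd h2.symm (fun hh => hNoTwo v1 vn hv1n h1.symm hh)
          · linarith
        · linarith [hx vn]
      refine engine1 B hBsigned hBunb hBfree ?_
      rw [hBquad]
      nlinarith
  -- triangle sign analysis
  have he12 : A v1 v2 = -1 ∨ A v1 v2 = 1 := by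
    rcases hent v1 v2 with h | h | h
    · exact Or.inl h
    · exact absurd h h12
    · exact Or.inr h
  have he2n : A v2 vn = -1 ∨ A v2 vn = 1 := by
    rcases hent v2 vn with h | h | h
    · exact Or.inl h
    · exact absurd h h2n
    · exact Or.inr h
  have hen1 : A vn v1 = -1 ∨ A vn v1 = 1 := by
    rcases hent vn v1 with h | h | h
    · exact Or.inl h
    · exact absurd h hn1
    · exact Or.inr h
  rcases he12 with e12 | e12 <;> rcases he2n with e2n | e2n <;> rcases hen1 with en1 | en1
  · exact absurd (hallneg e12 e2n en1) not_false
  · -- (-1, -1, 1) : product positive, contradiction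
    rw [e12, e2n, en1] at htri; norm_num at htri
  · -- (-1, 1, -1) : product positive, contradiction
    rw [e12, e2n, en1] at htri; norm_num at htri
  · -- (-1, 1, 1) : the unique negative edge is (v1, v2)
    have hset : {p : Fin n × Fin n | p.1 < p.2 ∧ A p.1 p.2 < 0} = {(v1, v2)} := by
      ext ⟨p, q⟩
      simp only [Set.mem_setOf_eq, Set.mem_singleton_iff, Prod.mk.injEq]
      constructor
      · rintro ⟨hlt, hneg⟩
        rcases hneg_tri p q hneg with
          ⟨rfl, rfl⟩ | ⟨rfl, rfl⟩ | ⟨rfl, rfl⟩ | ⟨rfl, rfl⟩ | ⟨rfl, rfl⟩ | ⟨rfl, rfl⟩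
        · exact ⟨rfl, rfl⟩
        · exact absurd hlt (not_lt.mpr hlt12.le)
        · rw [e2n] at hneg; norm_num at hneg
        · exact absurd hlt (not_lt.mpr hlt2n.le)
        · rw [hsym2 v1 vn, en1] at hneg; norm_num at hneg
        · exact absurd hlt (not_lt.mpr hlt1n.le)
      · rintro ⟨rfl, rfl⟩
        exact ⟨hlt12, by rw [e12]; norm_num⟩
    rw [hset]
    exact Set.ncard_singleton _
  · -- (1, -1, -1) : product positive, contradiction
    rw [e12, e2n, en1] at htri; norm_num at htri
  · -- (1, -1, 1) : the unique negative edge is (v2, vn)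
    have hset : {p : Fin n × Fin n | p.1 < p.2 ∧ A p.1 p.2 < 0} = {(v2, vn)} := by
      ext ⟨p, q⟩
      simp only [Set.mem_setOf_eq, Set.mem_singleton_iff, Prod.mk.injEq]
      constructor
      · rintro ⟨hlt, hneg⟩
        rcases hneg_tri p q hneg with
          ⟨rfl, rfl⟩ | ⟨rfl, rfl⟩ | ⟨rfl, rfl⟩ | ⟨rfl, rfl⟩ | ⟨rfl, rfl⟩ | ⟨rfl, rfl⟩
        · rw [e12] at hneg; norm_num at hneg
        · exact absurd hlt (not_lt.mpr hlt12.le)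
        · exact ⟨rfl, rfl⟩
        · exact absurd hlt (not_lt.mpr hlt2n.le)
        · rw [hsym2 v1 vn, en1] at hneg; norm_num at hneg
        · exact absurd hlt (not_lt.mpr hlt1n.le)
      · rintro ⟨rfl, rfl⟩
        exact ⟨hlt2n, by rw [e2n]; norm_num⟩
    rw [hset]
    exact Set.ncard_singleton _
  · -- (1, 1, -1) : the unique negative edge is (v1, vn)
    have hset : {p : Fin n × Fin n | p.1 < p.2 ∧ A p.1 p.2 < 0} = {(v1, vn)} := by
      ext ⟨p, q⟩
      simp only [Set.mem_setOf_eq, Set.mem_singleton_iff, Prod.mk.injEq]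
      constructor
      · rintro ⟨hlt, hneg⟩
        rcases hneg_tri p q hneg with
          ⟨rfl, rfl⟩ | ⟨rfl, rfl⟩ | ⟨rfl, rfl⟩ | ⟨rfl, rfl⟩ | ⟨rfl, rfl⟩ | ⟨rfl, rfl⟩
        · rw [e12] at hneg; norm_num at hneg
        · exact absurd hlt (not_lt.mpr hlt12.le)
        · rw [e2n] at hneg; norm_num at hneg
        · exact absurd hlt (not_lt.mpr hlt2n.le)
        · exact ⟨rfl, rfl⟩
        · exact absurd hlt (not_lt.mpr hlt1n.le)
      · rintro ⟨rfl, rfl⟩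
        exact ⟨hlt1n, by rw [hsym2 v1 vn, en1]; norm_num⟩
    rw [hset]
    exact Set.ncard_singleton _
  · -- (1, 1, 1) : product positive, contradiction
    rw [e12, e2n, en1] at htri; norm_num at htri
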